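/- arXiv:1101.4448 — 3 statements merged into one kernel-verified Lean document; each statement's English description precedes it below -/
import Mathlib

section
/- Positive semidefiniteness of the distance kernel on the sphere: Let d ≥ 2, let x_0, …, x_{N-1} ∈ S^d and a_0, …, a_{N-1} ∈ ℂ. Then the sum ∑_{k,ℓ=0}^{N-1} a_k · conj(a_ℓ) · (1 − C_d ‖x_k − x_ℓ‖) is a nonnegative real number. -/
open MeasureTheory
open scoped RealInnerProductSpace

noncomputable section

/-- The unit sphere `S^d` in `ℝ^{d+1}`. -/
def sphereSet (d : ℕ) : Set (EuclideanSpace ℝ (Fin (d + 1))) :=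
  Metric.sphere 0 1

/-- The normalized surface (uniform) measure `σ_d` on `S^d`. -/
def uSph (d : ℕ) : Measure (EuclideanSpace ℝ (Fin (d + 1))) :=
  (μH[(d : ℝ)] (sphereSet d))⁻¹ • (μH[(d : ℝ)]).restrict (sphereSet d)

/-- The spherical cap `C(z;t) = {y ∈ S^d : ⟨z,y⟩ ≥ t}`. -/
def cap (d : ℕ) (z : EuclideanSpace ℝ (Fin (d + 1))) (t : ℝ) :
    Set (EuclideanSpace ℝ (Fin (d + 1))) :=
  {y | y ∈ sphereSet d ∧ t ≤ ⟪z, y⟫}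

/-- Indicator function `1_{C(z;t)}`. -/
def capInd (d : ℕ) (z : EuclideanSpace ℝ (Fin (d + 1))) (t : ℝ)
    (x : EuclideanSpace ℝ (Fin (d + 1))) : ℝ :=
  (cap d z t).indicator (fun _ => (1 : ℝ)) x

/-- The constant `C_d = (1/d) Γ((d+1)/2)/(√π Γ(d/2))`. -/
def Cd (d : ℕ) : ℝ :=
  (1 / (d : ℝ)) * Real.Gamma (((d : ℝ) + 1) / 2) /
    (Real.sqrt Real.pi * Real.Gamma ((d : ℝ) / 2))

end

/-! ### Auxiliary lemmas -/

/-- The min kernel is PSD on nonnegative reals. -/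
lemma aux_sum_sum_min_nonneg {N : ℕ} (s : Fin N → ℝ) (hs : ∀ k, 0 ≤ s k) (c : Fin N → ℝ) :
    0 ≤ ∑ k, ∑ l, c k * c l * min (s k) (s l) := by
  set f : Fin N → ℝ → ℝ := fun k => (Set.Ioc (0:ℝ) (s k)).indicator (fun _ => c k) with hf
  have hprod : ∀ k l t, f k t * f l t
      = (Set.Ioc (0:ℝ) (min (s k) (s l))).indicator (fun _ => c k * c l) t := by
    intro k l t
    simp only [hf, Set.indicator_apply, Set.mem_Ioc, le_min_iff]
    split_ifs <;> simp_all
  have hint : ∀ (r : ℝ) (e : ℝ), 0 ≤ r →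
      ∫ t, (Set.Ioc (0:ℝ) r).indicator (fun _ => e) t = r * e := by
    intro r e hr
    rw [MeasureTheory.integral_indicator_const e measurableSet_Ioc]
    simp [Real.volume_Ioc, ENNReal.toReal_ofReal hr, smul_eq_mul, hr]
  have hintg : ∀ k l, Integrable (fun t => f k t * f l t) := by
    intro k l
    have : (fun t => f k t * f l t)
        = (Set.Ioc (0:ℝ) (min (s k) (s l))).indicator (fun _ => c k * c l) :=
      funext (hprod k l)
    rw [this]
    exact (integrable_indicator_iff measurableSet_Ioc).2
      (integrableOn_const measure_Ioc_lt_top.ne)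
  have key : ∑ k, ∑ l, c k * c l * min (s k) (s l) = ∫ t, (∑ k, f k t)^2 := by
    have h1 : ∀ t, (∑ k, f k t)^2 = ∑ k, ∑ l, f k t * f l t := by
      intro t; rw [sq, Finset.sum_mul_sum]
    calc ∑ k, ∑ l, c k * c l * min (s k) (s l)
        = ∑ k, ∑ l, ∫ t, f k t * f l t := by
          refine Finset.sum_congr rfl fun k _ => Finset.sum_congr rfl fun l _ => ?_
          rw [funext (hprod k l), hint _ _ (le_min (hs k) (hs l))]
          ring
      _ = ∑ k, ∫ t, ∑ l, f k t * f l t := by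
          refine Finset.sum_congr rfl fun k _ => ?_
          rw [integral_finset_sum _ (fun l _ => hintg k l)]
      _ = ∫ t, ∑ k, ∑ l, f k t * f l t := by
          rw [integral_finset_sum _ (fun k _ => integrable_finset_sum _ (fun l _ => hintg k l))]
      _ = ∫ t, (∑ k, f k t)^2 := by
          exact integral_congr_ae (Filter.Eventually.of_forall fun t => (h1 t).symm)
  rw [key]
  exact integral_nonneg fun t => sq_nonneg _

lemma aux_abs_kernel_eq (a b : ℝ) :
    |a| + |b| - |a - b| = 2 * (min (max a 0) (max b 0) + min (max (-a) 0) (max (-b) 0)) := by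
  rcases le_total 0 a with ha | ha <;> rcases le_total 0 b with hb | hb <;>
    rcases le_total a b with hab | hab <;>
    simp [abs_of_nonneg, abs_of_nonpos, max_def, min_def, sub_nonneg, sub_nonpos, *] <;>
    first | (split_ifs <;> linarith) | linarith

/-- The 1-dimensional kernel `|a| + |b| - |a - b|` is PSD. -/
lemma aux_psd_one_dim {N : ℕ} (A c : Fin N → ℝ) :
    0 ≤ ∑ k, ∑ l, c k * c l * (|A k| + |A l| - |A k - A l|) := by
  have h1 := aux_sum_sum_min_nonneg (fun k => max (A k) 0) (fun k => le_max_right _ _) c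
  have h2 := aux_sum_sum_min_nonneg (fun k => max (-A k) 0) (fun k => le_max_right _ _) c
  have hterm : ∀ k l, c k * c l * (|A k| + |A l| - |A k - A l|)
      = 2 * (c k * c l * min (max (A k) 0) (max (A l) 0))
        + 2 * (c k * c l * min (max (-A k) 0) (max (-A l) 0)) := by
    intro k l; rw [aux_abs_kernel_eq]; ring
  calc (0:ℝ) ≤ 2 * (∑ k, ∑ l, c k * c l * min (max (A k) 0) (max (A l) 0))
        + 2 * (∑ k, ∑ l, c k * c l * min (max (-A k) 0) (max (-A l) 0)) := by positivity
    _ = ∑ k, ∑ l, c k * c l * (|A k| + |A l| - |A k - A l|) := by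
        simp only [hterm, Finset.sum_add_distrib, Finset.mul_sum]

namespace DistKernelAux

variable (d : ℕ)

/-- First coordinate vector. -/
noncomputable def e₀ : EuclideanSpace ℝ (Fin (d + 1)) := EuclideanSpace.single 0 1

/-- The normalizing constant: integral of `|⟪z, e₀⟫|` over the unit ball. -/
noncomputable def ballC : ℝ :=
  ∫ z in Metric.closedBall (0 : EuclideanSpace ℝ (Fin (d+1))) 1, |⟪z, e₀ d⟫|

lemma norm_e₀ : ‖e₀ d‖ = 1 := by
  simp [e₀, EuclideanSpace.norm_single]

lemma integral_abs_inner (u : EuclideanSpace ℝ (Fin (d+1))) :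
    ∫ z in Metric.closedBall (0 : EuclideanSpace ℝ (Fin (d+1))) 1, |⟪z, u⟫| = ballC d * ‖u‖ := by
  rcases eq_or_ne u 0 with rfl | hu
  · simp
  · set v : EuclideanSpace ℝ (Fin (d+1)) := ‖u‖⁻¹ • u with hv
    have hvnorm : ‖v‖ = 1 := by
      rw [hv, norm_smul, norm_inv, norm_norm, inv_mul_cancel₀ (norm_ne_zero_iff.2 hu)]
    have hnorm_eq : ‖e₀ d‖ = ‖v‖ := by rw [norm_e₀, hvnorm]
    set T : EuclideanSpace ℝ (Fin (d+1)) ≃ₗᵢ[ℝ] EuclideanSpace ℝ (Fin (d+1)) :=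
      Submodule.reflection (ℝ ∙ (e₀ d - v))ᗮ with hT
    have hTe : T (e₀ d) = v := Submodule.reflection_sub hnorm_eq
    have hmp : MeasurePreserving T := T.measurePreserving
    have hemb : MeasurableEmbedding T := T.toHomeomorph.measurableEmbedding
    have hpre : T ⁻¹' (Metric.closedBall (0 : EuclideanSpace ℝ (Fin (d+1))) 1)
        = Metric.closedBall 0 1 := by
      ext z; simp [mem_closedBall_iff_norm, T.norm_map]
    have step1 : ∀ z : EuclideanSpace ℝ (Fin (d+1)), |⟪z, u⟫| = ‖u‖ * |⟪z, v⟫| := by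
      intro z
      have : u = ‖u‖ • v := by
        rw [hv, smul_smul, mul_inv_cancel₀ (norm_ne_zero_iff.2 hu), one_smul]
      rw [this, real_inner_smul_right, abs_mul, abs_of_nonneg (norm_nonneg u), ← this]
    calc ∫ z in Metric.closedBall (0:EuclideanSpace ℝ (Fin (d+1))) 1, |⟪z, u⟫|
        = ∫ z in Metric.closedBall (0:EuclideanSpace ℝ (Fin (d+1))) 1, ‖u‖ * |⟪z, v⟫| := by
          simp only [step1]
      _ = ‖u‖ * ∫ z in Metric.closedBall (0:EuclideanSpace ℝ (Fin (d+1))) 1, |⟪z, v⟫| := by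
          rw [integral_const_mul]
      _ = ‖u‖ * ∫ z in Metric.closedBall (0:EuclideanSpace ℝ (Fin (d+1))) 1, |⟪T z, v⟫| := by
          rw [← hmp.setIntegral_preimage_emb hemb (fun z => |⟪z, v⟫|) (Metric.closedBall 0 1),
            hpre]
      _ = ‖u‖ * ballC d := by
          congr 1
          refine setIntegral_congr_fun measurableSet_closedBall fun z _ => ?_
          rw [← hTe, T.inner_map_map]
      _ = ballC d * ‖u‖ := mul_comm _ _

lemma ballC_pos : 0 < ballC d := by
  have hK : volume {z : EuclideanSpace ℝ (Fin (d+1)) | ⟪z, e₀ d⟫ = 0} = 0 := by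
    have : {z : EuclideanSpace ℝ (Fin (d+1)) | ⟪z, e₀ d⟫ = 0}
        = ((ℝ ∙ (e₀ d))ᗮ : Submodule ℝ (EuclideanSpace ℝ (Fin (d+1)))) := by
      ext z
      simp [Submodule.mem_orthogonal_singleton_iff_inner_left, real_inner_comm]
    rw [this]
    refine Measure.addHaar_submodule _ _ ?_
    intro h
    have : e₀ d ∈ (ℝ ∙ (e₀ d))ᗮ := h ▸ Submodule.mem_top
    have h2 := this (e₀ d) (Submodule.mem_span_singleton_self _)
    rw [real_inner_self_eq_norm_sq, norm_e₀] at h2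
    norm_num at h2
  have hinteg : IntegrableOn (fun z : EuclideanSpace ℝ (Fin (d+1)) => |⟪z, e₀ d⟫|)
      (Metric.closedBall 0 1) volume := by
    have hc : Continuous fun z : EuclideanSpace ℝ (Fin (d+1)) => |⟪z, e₀ d⟫| :=
      (continuous_inner.comp (continuous_id.prodMk continuous_const)).abs
    exact hc.locallyIntegrable.integrableOn_isCompact (isCompact_closedBall 0 1)
  rw [ballC, setIntegral_pos_iff_support_of_nonneg_ae
    (Filter.Eventually.of_forall fun z => abs_nonneg _) hinteg]
  have hsub : Metric.closedBall (0:EuclideanSpace ℝ (Fin (d+1))) 1 \ {z | ⟪z, e₀ d⟫ = 0}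
      ⊆ (Function.support fun z => |⟪z, e₀ d⟫|) ∩ Metric.closedBall 0 1 := by
    rintro z ⟨hz1, hz2⟩
    exact ⟨by simpa [Function.mem_support, abs_eq_zero] using hz2, hz1⟩
  refine lt_of_lt_of_le ?_ (measure_mono hsub)
  rw [measure_diff_null hK]
  exact Metric.measure_closedBall_pos volume 0 one_pos

/-- The kernel `2 - ‖x - y‖` is PSD on the unit sphere. -/
lemma psd_sphere {N : ℕ} (x : Fin N → EuclideanSpace ℝ (Fin (d+1)))
    (hx : ∀ k, ‖x k‖ = 1) (c : Fin N → ℝ) :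
    0 ≤ ∑ k, ∑ l, c k * c l * (2 - ‖x k - x l‖) := by
  set B := Metric.closedBall (0 : EuclideanSpace ℝ (Fin (d+1))) 1 with hB
  have hcont : ∀ u : EuclideanSpace ℝ (Fin (d+1)),
      Continuous fun z : EuclideanSpace ℝ (Fin (d+1)) => |⟪z, u⟫| := fun u =>
    (continuous_inner.comp (continuous_id.prodMk continuous_const)).abs
  have hintg : ∀ u : EuclideanSpace ℝ (Fin (d+1)),
      IntegrableOn (fun z : EuclideanSpace ℝ (Fin (d+1)) => |⟪z, u⟫|) B volume := fun u =>
    (hcont u).locallyIntegrable.integrableOn_isCompact (isCompact_closedBall 0 1)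
  have key : ∀ k l, ∫ z in B,
      (c k * c l * (|⟪z, x k⟫| + |⟪z, x l⟫| - |⟪z, x k⟫ - ⟪z, x l⟫|))
      = ballC d * (c k * c l * (2 - ‖x k - x l‖)) := by
    intro k l
    have h3 : (fun z : EuclideanSpace ℝ (Fin (d+1)) => |⟪z, x k⟫ - ⟪z, x l⟫|)
        = fun z => |⟪z, x k - x l⟫| := by
      funext z; rw [inner_sub_right]
    rw [integral_const_mul]
    have hC : IntegrableOn (fun z : EuclideanSpace ℝ (Fin (d+1)) =>
        |⟪z, x k⟫ - ⟪z, x l⟫|) B volume := by rw [h3]; exact hintg _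
    have h4 : ∫ z in B, (|⟪z, x k⟫| + |⟪z, x l⟫| - |⟪z, x k⟫ - ⟪z, x l⟫|)
        = ballC d * ‖x k‖ + ballC d * ‖x l‖ - ballC d * ‖x k - x l‖ := by
      calc ∫ z in B, (|⟪z, x k⟫| + |⟪z, x l⟫| - |⟪z, x k⟫ - ⟪z, x l⟫|)
          = (∫ z in B, (|⟪z, x k⟫| + |⟪z, x l⟫|))
            - ∫ z in B, |⟪z, x k⟫ - ⟪z, x l⟫| :=
            integral_sub ((hintg (x k)).add (hintg (x l))) hC
        _ = ((∫ z in B, |⟪z, x k⟫|) + ∫ z in B, |⟪z, x l⟫|)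
            - ∫ z in B, |⟪z, x k - x l⟫| := by
            rw [integral_add (hintg (x k)) (hintg (x l)), h3]
        _ = ballC d * ‖x k‖ + ballC d * ‖x l‖ - ballC d * ‖x k - x l‖ := by
            rw [integral_abs_inner, integral_abs_inner, integral_abs_inner]
    rw [h4, hx k, hx l]; ring
  have h0 : ∀ z : EuclideanSpace ℝ (Fin (d+1)),
      0 ≤ ∑ k, ∑ l, c k * c l * (|⟪z, x k⟫| + |⟪z, x l⟫| - |⟪z, x k⟫ - ⟪z, x l⟫|) :=
    fun z => aux_psd_one_dim (fun k => ⟪z, x k⟫) c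
  have hIkl : ∀ k l, IntegrableOn (fun z : EuclideanSpace ℝ (Fin (d+1)) =>
      c k * c l * (|⟪z, x k⟫| + |⟪z, x l⟫| - |⟪z, x k⟫ - ⟪z, x l⟫|)) B volume := by
    intro k l
    have hc : Continuous fun z : EuclideanSpace ℝ (Fin (d+1)) =>
        c k * c l * (|⟪z, x k⟫| + |⟪z, x l⟫| - |⟪z, x k⟫ - ⟪z, x l⟫|) := by
      apply Continuous.mul continuous_const
      exact ((hcont (x k)).add (hcont (x l))).sub
        (((continuous_inner.comp (continuous_id.prodMk continuous_const)).sub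
          (continuous_inner.comp (continuous_id.prodMk continuous_const))).abs)
    exact hc.locallyIntegrable.integrableOn_isCompact (isCompact_closedBall 0 1)
  have hmain : ballC d * ∑ k, ∑ l, c k * c l * (2 - ‖x k - x l‖)
      = ∫ z in B, ∑ k, ∑ l, c k * c l *
          (|⟪z, x k⟫| + |⟪z, x l⟫| - |⟪z, x k⟫ - ⟪z, x l⟫|) := by
    rw [integral_finset_sum _ (fun k _ => integrable_finset_sum _ (fun l _ => hIkl k l))]
    rw [Finset.mul_sum]
    refine Finset.sum_congr rfl fun k _ => ?_
    rw [integral_finset_sum _ (fun l _ => hIkl k l), Finset.mul_sum]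
    refine Finset.sum_congr rfl fun l _ => ?_
    rw [key k l]
  have hnn : 0 ≤ ballC d * ∑ k, ∑ l, c k * c l * (2 - ‖x k - x l‖) := by
    rw [hmain]
    exact setIntegral_nonneg measurableSet_closedBall fun z _ => h0 z
  have := ballC_pos d
  nlinarith [hnn, this]

end DistKernelAux

lemma aux_Cd_nonneg {d : ℕ} (hd : 2 ≤ d) : 0 ≤ Cd d := by
  have h1 : (0:ℝ) < d := by exact_mod_cast (by omega : 0 < d)
  have h2 : 0 < Real.Gamma (((d:ℝ)+1)/2) := Real.Gamma_pos_of_pos (by positivity)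
  have h3 : 0 < Real.Gamma ((d:ℝ)/2) := Real.Gamma_pos_of_pos (by positivity)
  have h4 : 0 < Real.sqrt Real.pi := Real.sqrt_pos.2 Real.pi_pos
  unfold Cd; positivity

lemma aux_Cd_le_half {d : ℕ} (hd : 2 ≤ d) : Cd d ≤ 1 / 2 := by
  have hd0 : (0:ℝ) < d := by exact_mod_cast (by omega : 0 < d)
  unfold Cd
  set t : ℝ := (d : ℝ) / 2 with ht
  have ht1 : 1 ≤ t := by
    rw [ht, le_div_iff₀ (by norm_num : (0:ℝ) < 2)]
    norm_num
    exact_mod_cast hd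
  have ht0 : 0 < t := lt_of_lt_of_le one_pos ht1
  set g := Real.Gamma t with hg
  have hgpos : 0 < g := Real.Gamma_pos_of_pos ht0
  have hG2pos : 0 < Real.Gamma (t + 1/2) := Real.Gamma_pos_of_pos (by linarith)
  have hGt1pos : 0 < Real.Gamma (t + 1) := Real.Gamma_pos_of_pos (by linarith)
  have harg : ((d:ℝ)+1)/2 = t + 1/2 := by rw [ht]; ring
  have hconv := Real.convexOn_log_Gamma.2 (Set.mem_Ioi.2 ht0)
    (Set.mem_Ioi.2 (by linarith : (0:ℝ) < t + 1)) (by norm_num : (0:ℝ) ≤ 1/2)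
    (by norm_num : (0:ℝ) ≤ 1/2) (by norm_num)
  have hmid : (1/2 : ℝ) • t + (1/2 : ℝ) • (t + 1) = t + 1/2 := by
    simp only [smul_eq_mul]; ring
  rw [hmid] at hconv
  simp only [Function.comp_apply, smul_eq_mul] at hconv
  have hsq : Real.Gamma (t + 1/2) ^ 2 ≤ t * g ^ 2 := by
    have h2 : Real.Gamma (t+1/2)^2
        = Real.exp (Real.log (Real.Gamma (t+1/2)) + Real.log (Real.Gamma (t+1/2))) := by
      rw [Real.exp_add, Real.exp_log hG2pos, sq]
    have h3 : Real.exp (Real.log (Real.Gamma (t+1/2)) + Real.log (Real.Gamma (t+1/2)))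
        ≤ Real.exp (Real.log g + Real.log (Real.Gamma (t+1))) :=
      Real.exp_le_exp.2 (by linarith)
    have h4 : Real.exp (Real.log g + Real.log (Real.Gamma (t+1))) = t * g^2 := by
      rw [Real.exp_add, Real.exp_log hgpos, Real.exp_log hGt1pos,
        Real.Gamma_add_one (ne_of_gt ht0)]
      rw [hg]; ring
    linarith
  set s := Real.sqrt Real.pi with hs
  have hs2 : s^2 = Real.pi := Real.sq_sqrt Real.pi_pos.le
  have hspos : 0 < s := Real.sqrt_pos.2 Real.pi_pos
  have hmain : Real.Gamma (t + 1/2) ≤ t * s * g := by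
    have hsq2 : Real.Gamma (t+1/2)^2 ≤ (t*s*g)^2 := by
      have hπ3 : (3:ℝ) ≤ Real.pi := Real.pi_gt_three.le
      have hexp : (t*s*g)^2 = t^2 * Real.pi * g^2 := by
        rw [mul_pow, mul_pow, hs2]
      have htπ : 1 ≤ t * Real.pi := by nlinarith
      have hfac : 0 ≤ (t * Real.pi - 1) * (t * g^2) :=
        mul_nonneg (by linarith) (by positivity)
      rw [hexp]; nlinarith [hfac]
    calc Real.Gamma (t+1/2) = Real.sqrt (Real.Gamma (t+1/2)^2) :=
          (Real.sqrt_sq hG2pos.le).symm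
      _ ≤ Real.sqrt ((t*s*g)^2) := Real.sqrt_le_sqrt hsq2
      _ = t*s*g := Real.sqrt_sq (by positivity)
  rw [harg, div_le_iff₀ (by positivity : 0 < s * g)]
  have hstep : 1/(d:ℝ) * Real.Gamma (t+1/2) ≤ 1/(d:ℝ) * (t*s*g) :=
    mul_le_mul_of_nonneg_left hmain (by positivity)
  have heq : 1/(d:ℝ) * (t*s*g) = 1/2*(s*g) := by
    rw [ht]; field_simp
  linarith

/-- The real version of the PSD statement. -/
lemma aux_real_psd {d N : ℕ} (hd : 2 ≤ d) (x : Fin N → EuclideanSpace ℝ (Fin (d + 1)))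
    (hx : ∀ k, ‖x k‖ = 1) (c : Fin N → ℝ) :
    0 ≤ ∑ k, ∑ l, c k * c l * (1 - Cd d * ‖x k - x l‖) := by
  have h1 := DistKernelAux.psd_sphere d x hx c
  have h2 : (∑ k, c k)^2 = ∑ k, ∑ l, c k * c l := by rw [sq, Finset.sum_mul_sum]
  have hterm : ∀ k l, c k * c l * (1 - Cd d * ‖x k - x l‖)
      = (1 - 2 * Cd d) * (c k * c l) + Cd d * (c k * c l * (2 - ‖x k - x l‖)) := by
    intro k l; ring
  have hC0 := aux_Cd_nonneg hd
  have hC1 := aux_Cd_le_half hd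
  calc (0:ℝ) ≤ (1 - 2 * Cd d) * ((∑ k, c k)^2)
        + Cd d * ∑ k, ∑ l, c k * c l * (2 - ‖x k - x l‖) :=
        add_nonneg (mul_nonneg (by linarith) (sq_nonneg _)) (mul_nonneg hC0 h1)
    _ = ∑ k, ∑ l, c k * c l * (1 - Cd d * ‖x k - x l‖) := by
        rw [h2]
        simp only [hterm, Finset.sum_add_distrib, Finset.mul_sum]

/-- Positive semidefiniteness of the distance kernel `1 - C_d ‖x - y‖` on the sphere. -/
theorem distance_kernel_posdef (d N : ℕ) (hd : 2 ≤ d)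
    (x : Fin N → EuclideanSpace ℝ (Fin (d + 1)))
    (hx : ∀ k, x k ∈ sphereSet d)
    (a : Fin N → ℂ) :
    (∑ k, ∑ l, a k * (starRingEnd ℂ) (a l) *
        ((1 : ℂ) - ((Cd d * ‖x k - x l‖ : ℝ) : ℂ))).im = 0
    ∧ 0 ≤ (∑ k, ∑ l, a k * (starRingEnd ℂ) (a l) *
        ((1 : ℂ) - ((Cd d * ‖x k - x l‖ : ℝ) : ℂ))).re := by
  have hxu : ∀ k, ‖x k‖ = 1 := fun k => by
    have := hx k
    simpa [sphereSet, mem_sphere_zero_iff_norm] using this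
  set K : Fin N → Fin N → ℝ := fun k l => 1 - Cd d * ‖x k - x l‖ with hK
  have hsymm : ∀ k l, K k l = K l k := by
    intro k l; simp only [hK]; rw [norm_sub_rev]
  have hterm : ∀ k l, a k * (starRingEnd ℂ) (a l) * ((1 : ℂ) - ((Cd d * ‖x k - x l‖ : ℝ) : ℂ))
      = a k * (starRingEnd ℂ) (a l) * ((K k l : ℝ) : ℂ) := by
    intro k l
    simp only [hK]
    push_cast
    ring
  simp only [hterm]
  have him : ∀ k l, (a k * (starRingEnd ℂ) (a l) * ((K k l : ℝ) : ℂ)).im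
      = (a k * (starRingEnd ℂ) (a l)).im * K k l := by
    intro k l
    simp [Complex.mul_im]
  have hre : ∀ k l, (a k * (starRingEnd ℂ) (a l) * ((K k l : ℝ) : ℂ)).re
      = (a k * (starRingEnd ℂ) (a l)).re * K k l := by
    intro k l
    simp [Complex.mul_re]
  constructor
  · -- imaginary part is zero
    rw [Complex.im_sum]
    simp only [Complex.im_sum, him]
    have hanti : ∀ k l : Fin N, (a l * (starRingEnd ℂ) (a k)).im * K l k
        = -((a k * (starRingEnd ℂ) (a l)).im * K k l) := by
      intro k l
      rw [← hsymm k l]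
      have himeq : (a l * (starRingEnd ℂ) (a k)).im
          = -((a k * (starRingEnd ℂ) (a l)).im) := by
        simp [Complex.mul_im]; ring
      rw [himeq]; ring
    have hcomm : ∑ k : Fin N, ∑ l : Fin N, (a k * (starRingEnd ℂ) (a l)).im * K k l
        = ∑ k : Fin N, ∑ l : Fin N, (a l * (starRingEnd ℂ) (a k)).im * K l k :=
      Finset.sum_comm
    have h2 : ∑ k : Fin N, ∑ l : Fin N, (a l * (starRingEnd ℂ) (a k)).im * K l k
        = ∑ k : Fin N, ∑ l : Fin N, -((a k * (starRingEnd ℂ) (a l)).im * K k l) :=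
      Finset.sum_congr rfl fun k _ => Finset.sum_congr rfl fun l _ => hanti k l
    have h3 : ∑ k : Fin N, ∑ l : Fin N, -((a k * (starRingEnd ℂ) (a l)).im * K k l)
        = -∑ k : Fin N, ∑ l : Fin N, (a k * (starRingEnd ℂ) (a l)).im * K k l := by
      simp [Finset.sum_neg_distrib]
    linarith [hcomm, h2, h3]
  · -- real part is nonnegative
    rw [Complex.re_sum]
    simp only [Complex.re_sum, hre]
    have hdecomp : ∀ k l, (a k * (starRingEnd ℂ) (a l)).re * K k l
        = (a k).re * (a l).re * K k l + (a k).im * (a l).im * K k l := by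
      intro k l
      simp [Complex.mul_re]
      ring
    simp only [hdecomp, Finset.sum_add_distrib]
    have hp := aux_real_psd hd x hxu (fun k => (a k).re)
    have hq := aux_real_psd hd x hxu (fun k => (a k).im)
    simp only [hK] at hp hq ⊢
    exact add_nonneg hp hq
end

section
/- Closed form of the weighted kernel: Let d ≥ 2, let v : [−1,1] → ℝ be a nonnegative integrable function, and let V : [−1,1] → ℝ be an antiderivative of v. Then for all x, y ∈ S^d, K_{C,v}(x,y) = ∫_{S^d} V(min{⟨x,z⟩, ⟨y,z⟩}) dσ_d(z) − V(−1). -/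
open MeasureTheory
open scoped RealInnerProductSpace

section geomaux
open MeasureTheory

lemma abs_coord_le_norm {n : ℕ} (z : EuclideanSpace ℝ (Fin n)) (i : Fin n) :
    |z i| ≤ ‖z‖ := by
  rw [EuclideanSpace.norm_eq]
  have h1 : |z i| = Real.sqrt (‖z i‖ ^ 2) := by
    rw [Real.norm_eq_abs, Real.sqrt_sq_eq_abs, abs_abs]
  rw [h1]
  apply Real.sqrt_le_sqrt
  exact Finset.single_le_sum (f := fun j => ‖z j‖ ^ 2) (fun j _ => by positivity)
    (Finset.mem_univ i)

section radial
variable {E : Type*} [NormedAddCommGroup E] [NormedSpace ℝ E]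

lemma radial_aux (x y : E) (hx : 1 ≤ ‖x‖) (hy : 1 ≤ ‖y‖) (hxy : ‖y‖ ≤ ‖x‖) :
    ‖‖x‖⁻¹ • x - ‖y‖⁻¹ • y‖ ≤ 2 * ‖x - y‖ := by
  have hx0 : (0:ℝ) < ‖x‖ := by linarith
  have hy0 : (0:ℝ) < ‖y‖ := by linarith
  have key : ‖x‖⁻¹ • x - ‖y‖⁻¹ • y = ‖x‖⁻¹ • (x - y) + (‖x‖⁻¹ - ‖y‖⁻¹) • y := by
    rw [smul_sub, sub_smul]; abel
  rw [key]
  have h1 : ‖‖x‖⁻¹ • (x - y)‖ ≤ ‖x - y‖ := by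
    rw [norm_smul, Real.norm_eq_abs, abs_inv, abs_norm]
    calc ‖x‖⁻¹ * ‖x - y‖ ≤ 1 * ‖x - y‖ := by
          apply mul_le_mul_of_nonneg_right _ (norm_nonneg _)
          rw [inv_le_one_iff₀]; right; exact hx
      _ = ‖x - y‖ := one_mul _
  have h2 : ‖(‖x‖⁻¹ - ‖y‖⁻¹) • y‖ ≤ ‖x - y‖ := by
    rw [norm_smul, Real.norm_eq_abs]
    have : |‖x‖⁻¹ - ‖y‖⁻¹| = (‖x‖ - ‖y‖) / (‖x‖ * ‖y‖) := by
      rw [abs_sub_comm, inv_sub_inv hy0.ne' hx0.ne']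
      rw [abs_of_nonneg (by apply div_nonneg (by linarith) (by positivity)), mul_comm]
    rw [this]
    have hxmy : ‖x‖ - ‖y‖ ≤ ‖x - y‖ := by
      have := norm_sub_norm_le x y; linarith [abs_le.1 (abs_norm_sub_norm_le x y) |>.2]
    calc (‖x‖ - ‖y‖) / (‖x‖ * ‖y‖) * ‖y‖ = (‖x‖ - ‖y‖) / ‖x‖ := by
          field_simp
      _ ≤ ‖x - y‖ / ‖x‖ := by gcongr
      _ ≤ ‖x - y‖ / 1 := by
          apply div_le_div_of_nonneg_left (by linarith [norm_nonneg (x-y)]) one_pos hx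

      _ = ‖x - y‖ := div_one _
  calc ‖‖x‖⁻¹ • (x - y) + (‖x‖⁻¹ - ‖y‖⁻¹) • y‖
      ≤ ‖‖x‖⁻¹ • (x - y)‖ + ‖(‖x‖⁻¹ - ‖y‖⁻¹) • y‖ := norm_add_le _ _
    _ ≤ 2 * ‖x - y‖ := by linarith

lemma radial_lipschitzOn :
    LipschitzOnWith 2 (fun x : E => ‖x‖⁻¹ • x) {x : E | 1 ≤ ‖x‖} := by
  apply LipschitzOnWith.of_dist_le_mul
  intro x hx y hy
  simp only [Set.mem_setOf_eq] at hx hy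
  rw [dist_eq_norm, dist_eq_norm]
  rcases le_total ‖y‖ ‖x‖ with h | h
  · simpa using radial_aux x y hx hy h
  · rw [norm_sub_rev, norm_sub_rev x y]
    simpa using radial_aux y x hy hx h

end radial

section faces
variable (d : ℕ)

/-- The face map: insert value `ε` at coordinate `j`. -/
def faceMap (j : Fin (d+1)) (ε : ℝ) (w : Fin d → ℝ) : EuclideanSpace ℝ (Fin (d+1)) :=
  WithLp.toLp 2 (Fin.insertNth j ε w)

lemma faceMap_lipschitz (j : Fin (d+1)) (ε : ℝ) :
    LipschitzWith (NNReal.sqrt d) (faceMap d j ε) := by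
  apply LipschitzWith.of_dist_le_mul
  intro w w'
  rw [EuclideanSpace.dist_eq]
  have hsum : ∑ i : Fin (d+1), dist (faceMap d j ε w i) (faceMap d j ε w' i) ^ 2
      = ∑ k : Fin d, dist (w k) (w' k) ^ 2 := by
    rw [Fin.sum_univ_succAbove _ j]
    simp [faceMap, Fin.insertNth_apply_same, Fin.insertNth_apply_succAbove]
  calc Real.sqrt (∑ i : Fin (d+1), dist (faceMap d j ε w i) (faceMap d j ε w' i) ^ 2)
      = Real.sqrt (∑ k : Fin d, dist (w k) (w' k) ^ 2) := by rw [hsum]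
    _ ≤ Real.sqrt (∑ _k : Fin d, dist w w' ^ 2) := by
        apply Real.sqrt_le_sqrt
        apply Finset.sum_le_sum
        intro k _
        have := dist_le_pi_dist w w' k
        exact pow_le_pow_left₀ dist_nonneg this 2
    _ = Real.sqrt (d * dist w w' ^ 2) := by simp [mul_comm]
    _ = Real.sqrt d * dist w w' := by
        rw [Real.sqrt_mul (by positivity), Real.sqrt_sq dist_nonneg]
    _ = (NNReal.sqrt d : ℝ) * dist w w' := by
        congr 1
        rw [Real.coe_sqrt]
        norm_num
end faces

section fin
variable (d : ℕ)

noncomputable def radMap : EuclideanSpace ℝ (Fin (d+1)) → EuclideanSpace ℝ (Fin (d+1)) :=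
  fun x => ‖x‖⁻¹ • x

def faceSet (j : Fin (d+1)) (ε : ℝ) : Set (EuclideanSpace ℝ (Fin (d+1))) :=
  faceMap d j ε '' Metric.closedBall 0 1

lemma abs_coord_le_norm' {n : ℕ} (z : EuclideanSpace ℝ (Fin n)) (i : Fin n) :
    |z i| ≤ ‖z‖ := by
  rw [EuclideanSpace.norm_eq]
  have h1 : |z i| = Real.sqrt (‖z i‖ ^ 2) := by
    rw [Real.norm_eq_abs, Real.sqrt_sq_eq_abs, abs_abs]
  rw [h1]
  apply Real.sqrt_le_sqrt
  exact Finset.single_le_sum (f := fun j => ‖z j‖ ^ 2) (fun j _ => by positivity)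
    (Finset.mem_univ i)

lemma faceSet_subset (j : Fin (d+1)) (ε : ℝ) (hε : |ε| = 1) :
    faceSet d j ε ⊆ {x | 1 ≤ ‖x‖} := by
  rintro _ ⟨w, _, rfl⟩
  have h := abs_coord_le_norm' (n := d+1) (faceMap d j ε w) j
  have heq : faceMap d j ε w j = ε := by simp [faceMap]
  rw [heq, hε] at h
  exact h

lemma sphere_subset_cover :
    sphereSet d ⊆ ⋃ j : Fin (d+1),
      (radMap d '' faceSet d j 1 ∪ radMap d '' faceSet d j (-1)) := by
  intro z hz
  have hz1 : ‖z‖ = 1 := by simpa [sphereSet] using hz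
  have hzne : z ≠ 0 := by intro h; rw [h] at hz1; simp at hz1
  obtain ⟨j, -, hj⟩ := Finset.exists_max_image Finset.univ (fun k => |z k|)
    ⟨0, Finset.mem_univ 0⟩
  have hjpos : 0 < |z j| := by
    by_contra h
    push_neg at h
    have : ∀ k, z k = 0 := by
      intro k
      have := hj k (Finset.mem_univ k)
      have : |z k| ≤ 0 := le_trans this h
      simpa [abs_nonpos_iff] using this
    exact hzne (by ext k; exact this k)
  set c := |z j| with hc
  set x : EuclideanSpace ℝ (Fin (d+1)) := c⁻¹ • z with hxdef
  have hxj : |x j| = 1 := by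
    have : x j = c⁻¹ * z j := rfl
    rw [this, abs_mul, abs_inv, abs_of_pos hjpos]
    field_simp
    exact hc.symm
  have hxk : ∀ k, |x k| ≤ 1 := by
    intro k
    have : x k = c⁻¹ * z k := rfl
    rw [this, abs_mul, abs_inv, abs_of_pos hjpos]
    rw [inv_mul_le_iff₀ hjpos, mul_one]
    exact hj k (Finset.mem_univ k)
  have hxface : x ∈ faceSet d j (x j) := by
    refine ⟨j.removeNth x, ?_, ?_⟩
    · rw [Metric.mem_closedBall]
      apply dist_pi_le_iff one_pos.le |>.2
      intro k
      simpa [Fin.removeNth, Real.dist_eq] using hxk (j.succAbove k)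
    · exact congrArg (WithLp.toLp 2) (Fin.insertNth_self_removeNth j x)
  have hrx : radMap d x = z := by
    have hnx : ‖x‖ = c⁻¹ := by
      rw [hxdef, norm_smul, Real.norm_eq_abs, abs_inv, abs_of_pos hjpos, hz1, mul_one]
    rw [radMap, hnx, hxdef, inv_inv, smul_smul, mul_inv_cancel₀ hjpos.ne', one_smul]
  rcases abs_eq (le_of_lt one_pos) |>.1 hxj with h1 | h1
  · exact Set.mem_iUnion.2 ⟨j, Or.inl ⟨x, by rwa [← h1], hrx⟩⟩
  · exact Set.mem_iUnion.2 ⟨j, Or.inr ⟨x, by rwa [← h1], hrx⟩⟩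

lemma volume_eq_hausdorff' : (volume : Measure (Fin d → ℝ)) = μH[(d:ℝ)] := by
  have := hausdorffMeasure_pi_real (ι := Fin d)
  simp only [Fintype.card_fin] at this
  exact this.symm

lemma radMap_face_lt_top (j : Fin (d+1)) (ε : ℝ) (hε : |ε| = 1) :
    μH[(d:ℝ)] (radMap d '' faceSet d j ε) < ⊤ := by
  have h1 : μH[(d:ℝ)] (radMap d '' faceSet d j ε)
      ≤ (2:NNReal) ^ (d:ℝ) * μH[(d:ℝ)] (faceSet d j ε) := by
    have hl : LipschitzOnWith 2 (radMap d) (faceSet d j ε) :=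
      (radial_lipschitzOn).mono (faceSet_subset d j ε hε)
    exact hl.hausdorffMeasure_image_le (by positivity)
  have h2 : μH[(d:ℝ)] (faceSet d j ε)
      ≤ (NNReal.sqrt d : NNReal) ^ (d:ℝ) * μH[(d:ℝ)] (Metric.closedBall (0 : Fin d → ℝ) 1) := by
    exact (faceMap_lipschitz d j ε).hausdorffMeasure_image_le (by positivity) _
  have h3 : μH[(d:ℝ)] (Metric.closedBall (0 : Fin d → ℝ) 1) < ⊤ := by
    rw [← volume_eq_hausdorff']
    exact (isCompact_closedBall 0 1).measure_lt_top
  calc μH[(d:ℝ)] (radMap d '' faceSet d j ε)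
      ≤ (2:NNReal) ^ (d:ℝ) * μH[(d:ℝ)] (faceSet d j ε) := h1
    _ ≤ (2:NNReal) ^ (d:ℝ) * ((NNReal.sqrt d : NNReal) ^ (d:ℝ)
          * μH[(d:ℝ)] (Metric.closedBall (0 : Fin d → ℝ) 1)) := by
        gcongr
    _ < ⊤ := by
        apply ENNReal.mul_lt_top (ENNReal.rpow_lt_top_of_nonneg (Nat.cast_nonneg d) ENNReal.coe_ne_top)
        exact ENNReal.mul_lt_top (ENNReal.rpow_lt_top_of_nonneg (Nat.cast_nonneg d) ENNReal.coe_ne_top) h3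

lemma sphere_hausdorff_lt_top : μH[(d:ℝ)] (sphereSet d) < ⊤ := by
  apply lt_of_le_of_lt (measure_mono (sphere_subset_cover d))
  apply lt_of_le_of_lt (measure_iUnion_le _)
  rw [tsum_fintype]
  apply ENNReal.sum_lt_top.2
  intro j _
  apply lt_of_le_of_lt (measure_union_le _ _)
  exact ENNReal.add_lt_top.2 ⟨radMap_face_lt_top d j 1 (by norm_num),
    radMap_face_lt_top d j (-1) (by norm_num)⟩
end fin

lemma volume_eq_hausdorff (d : ℕ) : (volume : Measure (Fin d → ℝ)) = μH[(d:ℝ)] := by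
  have := hausdorffMeasure_pi_real (ι := Fin d)
  simp only [Fintype.card_fin] at this
  exact this.symm

lemma sphere_hausdorff_pos (d : ℕ) (hd : 1 ≤ d) : 0 < μH[(d:ℝ)] (sphereSet d) := by
  -- project to first d coordinates
  set f : EuclideanSpace ℝ (Fin (d+1)) → (Fin d → ℝ) := fun z i => z i.castSucc with hf
  have hlip : LipschitzWith 1 f := by
    apply LipschitzWith.of_dist_le_mul
    intro z z'
    rw [NNReal.coe_one, one_mul]
    apply dist_pi_le_iff dist_nonneg |>.2
    intro i
    have : dist (f z i) (f z' i) = |(z - z') i.castSucc| := by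
      simp only [hf, Real.dist_eq]; rfl
    rw [this, dist_eq_norm]
    exact abs_coord_le_norm (z - z') i.castSucc
  have himg : Metric.closedBall (0 : Fin d → ℝ) (1/d) ⊆ f '' sphereSet d := by
    intro w hw
    have hwb : ∀ i, |w i| ≤ 1/d := by
      intro i
      have := dist_le_pi_dist w 0 i
      simp only [Metric.mem_closedBall] at hw
      simpa [Real.dist_eq] using this.trans hw
    have hsum : ∑ i, w i ^ 2 ≤ 1 := by
      calc ∑ i, w i ^ 2 ≤ ∑ _i : Fin d, (1/d:ℝ)^2 := by
            apply Finset.sum_le_sum; intro i _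
            exact sq_le_sq' (by linarith [abs_le.1 (hwb i) |>.1]) (abs_le.1 (hwb i) |>.2)
        _ = d * (1/d:ℝ)^2 := by simp [mul_comm]
        _ ≤ 1 := by
            have hd0 : (1:ℝ) ≤ d := by exact_mod_cast hd
            rw [div_pow, one_pow, mul_one_div]
            rw [div_le_one (by positivity)]
            nlinarith
    set c := Real.sqrt (1 - ∑ i, w i ^ 2) with hc
    set z : EuclideanSpace ℝ (Fin (d+1)) := WithLp.toLp 2 (Fin.snoc w c) with hz
    refine ⟨z, ?_, ?_⟩
    · show z ∈ Metric.sphere 0 1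
      simp only [mem_sphere_iff_norm, sub_zero]
      rw [EuclideanSpace.norm_eq]
      have : ∑ i : Fin (d+1), ‖z i‖^2 = ∑ i : Fin d, w i ^2 + c^2 := by
        rw [Fin.sum_univ_castSucc]
        congr 1
        · apply Finset.sum_congr rfl; intro i _
          simp [hz, Real.norm_eq_abs, sq_abs, Fin.snoc_castSucc]
        · simp [hz, Real.norm_eq_abs, sq_abs, Fin.snoc_last]
      rw [this, hc, Real.sq_sqrt (by linarith)]
      simp
    · funext i; simp [hf, hz, Fin.snoc_castSucc]
  calc (0:ENNReal) < volume (Metric.closedBall (0 : Fin d → ℝ) (1/d)) := by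
        apply Metric.measure_closedBall_pos
        positivity
    _ = μH[(d:ℝ)] (Metric.closedBall (0 : Fin d → ℝ) (1/d)) := by rw [volume_eq_hausdorff]
    _ ≤ μH[(d:ℝ)] (f '' sphereSet d) := measure_mono himg
    _ ≤ (1:NNReal) ^ (d:ℝ) * μH[(d:ℝ)] (sphereSet d) :=
        hlip.hausdorffMeasure_image_le (by positivity) _
    _ = μH[(d:ℝ)] (sphereSet d) := by simp

end geomaux

/-- The weighted kernel `K_{C,v}(x,y) = ∫_{-1}^1 v(t) ∫_{S^d} 1_{C(z;t)}(x) 1_{C(z;t)}(y) dσ_d(z) dt`. -/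
noncomputable def Kv (d : ℕ) (v : ℝ → ℝ) (x y : EuclideanSpace ℝ (Fin (d + 1))) : ℝ :=
  ∫ t in (-1 : ℝ)..1, v t * ∫ z, capInd d z t x * capInd d z t y ∂(uSph d)


section mainaux

lemma uSph_prob (d : ℕ) (hd : 1 ≤ d) : IsProbabilityMeasure (uSph d) := by
  constructor
  rw [uSph, Measure.smul_apply, Measure.restrict_apply_univ, smul_eq_mul]
  exact ENNReal.inv_mul_cancel (sphere_hausdorff_pos d hd).ne'
    (sphere_hausdorff_lt_top d).ne

end mainaux

/-- Closed form of the weighted kernel: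

`K_{C,v}(x,y) = ∫_{S^d} V(min{⟨x,z⟩, ⟨y,z⟩}) dσ_d(z) - V(-1)`. -/
theorem weighted_kernel_closed_form (d : ℕ) (hd : 2 ≤ d)
    (v V : ℝ → ℝ)
    (hv0 : ∀ t ∈ Set.Icc (-1 : ℝ) 1, 0 ≤ v t)
    (hvInt : IntervalIntegrable v MeasureTheory.volume (-1) 1)
    (hV : ∀ s ∈ Set.Icc (-1 : ℝ) 1, V s = V (-1) + ∫ u in (-1 : ℝ)..s, v u)
    (x y : EuclideanSpace ℝ (Fin (d + 1)))
    (hx : x ∈ sphereSet d) (hy : y ∈ sphereSet d) :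
    Kv d v x y
      = (∫ z, V (min ⟪x, z⟫ ⟪y, z⟫) ∂(uSph d)) - V (-1) := by
  classical
  haveI hprob : IsProbabilityMeasure (uSph d) := uSph_prob d (by omega)
  set ν := uSph d with hν
  set μ := volume.restrict (Set.Ioc (-1:ℝ) 1) with hμ
  set m : EuclideanSpace ℝ (Fin (d+1)) → ℝ := fun z => min ⟪x, z⟫ ⟪y, z⟫ with hm
  set S : Set (ℝ × EuclideanSpace ℝ (Fin (d+1))) := {p | p.1 ≤ m p.2} with hSdef
  set F : ℝ × EuclideanSpace ℝ (Fin (d+1)) → ℝ :=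
    fun p => v p.1 * S.indicator (fun _ => (1:ℝ)) p with hFdef
  have hmcont : Continuous m := by
    apply Continuous.min
    · exact continuous_const.inner continuous_id
    · exact continuous_const.inner continuous_id
  have hS : MeasurableSet S := by
    have : IsClosed S := isClosed_le continuous_fst (hmcont.comp continuous_snd)
    exact this.measurableSet
  -- pointwise identification of the integrand
  have hci : ∀ (z w : EuclideanSpace ℝ (Fin (d+1))) (t : ℝ), w ∈ sphereSet d →
      capInd d z t w = if t ≤ ⟪w, z⟫ then 1 else 0 := by
    intro z w t hw
    simp only [capInd, cap, Set.indicator_apply, Set.mem_setOf_eq, hw, true_and,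
      real_inner_comm]
  have hcap : ∀ (t : ℝ) (z : EuclideanSpace ℝ (Fin (d+1))),
      capInd d z t x * capInd d z t y = S.indicator (fun _ => (1:ℝ)) (t, z) := by
    intro t z
    rw [hci z x t hx, hci z y t hy]
    have hmem : ((t, z) ∈ S) ↔ (t ≤ ⟪x, z⟫ ∧ t ≤ ⟪y, z⟫) := by
      simp only [hSdef, Set.mem_setOf_eq, hm, le_min_iff]
    simp only [Set.indicator_apply, hmem]
    by_cases h1 : t ≤ ⟪x, z⟫ <;> by_cases h2 : t ≤ ⟪y, z⟫ <;>
      simp only [h1, h2, if_true, if_false, and_self, and_true, true_and, and_false,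
        false_and, mul_one, mul_zero]
  -- measurability and integrability of F on the product
  have hmp : MeasurePreserving Prod.fst (μ.prod ν) μ :=
    ⟨measurable_fst, by simp [Measure.map_fst_prod]⟩
  have hvsm : AEStronglyMeasurable v μ := hvInt.1.aestronglyMeasurable
  have h1 : AEStronglyMeasurable (fun p : ℝ × EuclideanSpace ℝ (Fin (d+1)) => v p.1)
      (μ.prod ν) := hvsm.comp_quasiMeasurePreserving hmp.quasiMeasurePreserving
  have hFsm : AEStronglyMeasurable F (μ.prod ν) := by
    exact h1.mul (stronglyMeasurable_const.indicator hS).aestronglyMeasurable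
  have hFint : Integrable F (μ.prod ν) := by
    apply Integrable.mono' (g := fun p => |v p.1|) ?_ hFsm
    · filter_upwards with p
      rw [hFdef]
      simp only [Real.norm_eq_abs, abs_mul]
      by_cases hp : p ∈ S <;>
        simp [Set.indicator_apply, hp, abs_nonneg]
    · have : Integrable (fun t => |v t|) μ := hvInt.1.abs
      exact (hmp.integrable_comp this.aestronglyMeasurable).2 this
  -- rewrite Kv as a double integral of F
  have hKv : Kv d v x y = ∫ t in Set.Ioc (-1:ℝ) 1, ∫ z, F (t, z) ∂ν ∂volume := by
    rw [Kv, intervalIntegral.integral_of_le (by norm_num : (-1:ℝ) ≤ 1)]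
    apply integral_congr_ae
    filter_upwards with t
    rw [← integral_const_mul]
    apply integral_congr_ae
    filter_upwards with z
    rw [hcap t z, hFdef]
  -- swap
  have hswap : ∫ t in Set.Ioc (-1:ℝ) 1, ∫ z, F (t, z) ∂ν ∂volume
      = ∫ z, ∫ t in Set.Ioc (-1:ℝ) 1, F (t, z) ∂volume ∂ν := by
    exact MeasureTheory.integral_integral_swap (f := fun t z => F (t, z)) hFint
  -- a.e. points of ν are on the sphere
  have hzs : ∀ᵐ z ∂ν, z ∈ sphereSet d := by
    rw [hν, uSph]
    exact Measure.ae_smul_measure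
      (ae_restrict_mem Metric.isClosed_sphere.measurableSet) _
  -- inner integral computation
  have hinner : ∀ᵐ z ∂ν,
      (∫ t in Set.Ioc (-1:ℝ) 1, F (t, z) ∂volume) = V (m z) - V (-1) := by
    filter_upwards [hzs] with z hz
    have hz1 : ‖z‖ = 1 := by simpa [sphereSet] using hz
    have hx1 : ‖x‖ = 1 := by simpa [sphereSet] using hx
    have hy1 : ‖y‖ = 1 := by simpa [sphereSet] using hy
    have hbx : |⟪x, z⟫| ≤ 1 := by
      have := abs_real_inner_le_norm x z
      rwa [hx1, hz1, one_mul] at this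
    have hby : |⟪y, z⟫| ≤ 1 := by
      have := abs_real_inner_le_norm y z
      rwa [hy1, hz1, one_mul] at this
    have hm1 : -1 ≤ m z := le_min (abs_le.1 hbx).1 (abs_le.1 hby).1
    have hm2 : m z ≤ 1 := min_le_of_left_le (abs_le.1 hbx).2
    have hFz : ∀ t, F (t, z) = (Set.Iic (m z)).indicator v t := by
      intro t
      rw [hFdef]
      by_cases h : t ≤ m z <;>
        simp [Set.indicator_apply, hSdef, Set.mem_Iic, h]
    calc (∫ t in Set.Ioc (-1:ℝ) 1, F (t, z) ∂volume)
        = ∫ t in Set.Ioc (-1:ℝ) 1, (Set.Iic (m z)).indicator v t ∂volume := by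
          apply integral_congr_ae; filter_upwards with t; rw [hFz t]
      _ = ∫ t in Set.Ioc (-1:ℝ) 1 ∩ Set.Iic (m z), v t ∂volume :=
          setIntegral_indicator measurableSet_Iic
      _ = ∫ t in Set.Ioc (-1:ℝ) (m z), v t ∂volume := by
          rw [Set.Ioc_inter_Iic, inf_eq_right.2 hm2]
      _ = ∫ t in (-1:ℝ)..(m z), v t :=
          (intervalIntegral.integral_of_le hm1).symm
      _ = V (m z) - V (-1) := by
          rw [hV (m z) ⟨hm1, hm2⟩]; ring
  have hIntInner : Integrable
      (fun z => ∫ t in Set.Ioc (-1:ℝ) 1, F (t, z) ∂volume) ν := by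
    exact hFint.integral_prod_right
  have hIntVm : Integrable (fun z => V (m z) - V (-1)) ν := hIntInner.congr hinner
  have hIntV : Integrable (fun z => V (m z)) ν := by
    have := hIntVm.add (integrable_const (V (-1)))
    apply this.congr
    filter_upwards with z
    simp only [Pi.add_apply]
    ring
  rw [hKv, hswap, integral_congr_ae hinner,
    integral_sub hIntV (integrable_const _), integral_const]
  simp only [measure_univ, ENNReal.toReal_one, one_smul, probReal_univ]
  rfl
end

section
/- Squared kernel-distance invariance principle: Let d ≥ 2, let v : [−1,1] → ℝ be a nonnegative integrable function, and define D(x,y) = K_{C,v}(x,x) − 2 K_{C,v}(x,y) + K_{C,v}(y,y) for x, y ∈ S^d. Then for any N points x_0, …, x_{N-1} ∈ S^d, (1/N²) ∑_{k,ℓ=0}^{N-1} D(x_k, x_ℓ) + 2 ∫_{−1}^{1} v(t) ∫_{S^d} |σ_d(C(x;t)) − (1/N) ∑_{k=0}^{N-1} 1_{C(x;t)}(x_k)|² dσ_d(x) dt = ∫_{S^d} ∫_{S^d} D(x,y) dσ_d(x) dσ_d(y). -/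
open MeasureTheory
open scoped RealInnerProductSpace

/- ### Auxiliary material -/

section Aux

/-- The "dual cap" of `a`, viewed from the moving-center variable. -/
def Vset (d : ℕ) (a : EuclideanSpace ℝ (Fin (d + 1))) (t : ℝ) :
    Set (EuclideanSpace ℝ (Fin (d + 1))) :=
  {w | a ∈ sphereSet d ∧ t ≤ ⟪w, a⟫}

/-- The inner `z`-integral of the kernel, as a function of `t`. -/
noncomputable def Gfun (d : ℕ) (a b : EuclideanSpace ℝ (Fin (d + 1))) (t : ℝ) : ℝ :=
  ∫ z, capInd d z t a * capInd d z t b ∂(uSph d)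

/-- The normalized measure of a cap centered at `z0`, as a function of `t`. -/
noncomputable def Phi (d : ℕ) (z0 : EuclideanSpace ℝ (Fin (d + 1))) (t : ℝ) : ℝ :=
  (uSph d (cap d z0 t)).toReal

lemma mem_sphereSet_iff {d : ℕ} {z : EuclideanSpace ℝ (Fin (d + 1))} :
    z ∈ sphereSet d ↔ ‖z‖ = 1 := mem_sphere_zero_iff_norm

lemma measurableSet_sphereSet (d : ℕ) : MeasurableSet (sphereSet d) :=
  Metric.isClosed_sphere.measurableSet

lemma measurableSet_cap (d : ℕ) (z : EuclideanSpace ℝ (Fin (d + 1))) (t : ℝ) :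
    MeasurableSet (cap d z t) := by
  have h : cap d z t = sphereSet d ∩ {y | t ≤ ⟪z, y⟫} := rfl
  rw [h]
  exact (measurableSet_sphereSet d).inter
    (isClosed_le continuous_const (Continuous.inner continuous_const continuous_id)).measurableSet

lemma measurableSet_Vset (d : ℕ) (a : EuclideanSpace ℝ (Fin (d + 1))) (t : ℝ) :
    MeasurableSet (Vset d a t) := by
  by_cases h : a ∈ sphereSet d
  · have he : Vset d a t = {w | t ≤ ⟪w, a⟫} := by ext w; simp [Vset, h]
    rw [he]
    exact (isClosed_le continuous_const
      (Continuous.inner continuous_id continuous_const)).measurableSet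
  · have he : Vset d a t = ∅ := by ext w; simp [Vset, h]
    rw [he]; exact MeasurableSet.empty

lemma capInd_eq (d : ℕ) (z : EuclideanSpace ℝ (Fin (d + 1))) (t : ℝ)
    (a : EuclideanSpace ℝ (Fin (d + 1))) :
    capInd d z t a = (Vset d a t).indicator (fun _ => (1 : ℝ)) z := rfl

lemma capInd_nonneg (d : ℕ) (z : EuclideanSpace ℝ (Fin (d + 1))) (t : ℝ)
    (a : EuclideanSpace ℝ (Fin (d + 1))) : 0 ≤ capInd d z t a := by
  unfold capInd; exact Set.indicator_apply_nonneg (fun _ => zero_le_one)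

lemma capInd_le_one (d : ℕ) (z : EuclideanSpace ℝ (Fin (d + 1))) (t : ℝ)
    (a : EuclideanSpace ℝ (Fin (d + 1))) : capInd d z t a ≤ 1 := by
  unfold capInd; exact Set.indicator_apply_le' (fun _ => le_refl 1) (fun _ => zero_le_one)

lemma abs_capInd_le_one (d : ℕ) (z : EuclideanSpace ℝ (Fin (d + 1))) (t : ℝ)
    (a : EuclideanSpace ℝ (Fin (d + 1))) : |capInd d z t a| ≤ 1 :=
  abs_le.mpr ⟨by linarith [capInd_nonneg d z t a], capInd_le_one d z t a⟩

lemma capInd_mul (d : ℕ) (z : EuclideanSpace ℝ (Fin (d + 1))) (t : ℝ)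
    (a b : EuclideanSpace ℝ (Fin (d + 1))) :
    capInd d z t a * capInd d z t b
      = (Vset d a t ∩ Vset d b t).indicator (fun _ => (1 : ℝ)) z := by
  rw [capInd_eq, capInd_eq]
  by_cases h1 : z ∈ Vset d a t <;> by_cases h2 : z ∈ Vset d b t <;>
    simp [Set.indicator_apply, h1, h2]

lemma capInd_mul_self (d : ℕ) (z : EuclideanSpace ℝ (Fin (d + 1))) (t : ℝ)
    (a : EuclideanSpace ℝ (Fin (d + 1))) :
    capInd d z t a * capInd d z t a = capInd d z t a := by
  unfold capInd
  by_cases h : a ∈ cap d z t <;> simp [Set.indicator_apply, h]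

lemma measurable_capInd_comp {α : Type*} [TopologicalSpace α] [MeasurableSpace α]
    [OpensMeasurableSpace α] (d : ℕ)
    {Z A : α → EuclideanSpace ℝ (Fin (d + 1))} {T : α → ℝ}
    (hZ : Continuous Z) (hT : Continuous T) (hA : Continuous A) :
    Measurable (fun p => capInd d (Z p) (T p) (A p)) := by
  have h : (fun p => capInd d (Z p) (T p) (A p))
      = Set.indicator {p | A p ∈ sphereSet d ∧ T p ≤ ⟪Z p, A p⟫} (fun _ => (1 : ℝ)) := by
    funext p; rfl
  rw [h]
  refine measurable_const.indicator ?_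
  have he : {p | A p ∈ sphereSet d ∧ T p ≤ ⟪Z p, A p⟫}
      = (A ⁻¹' sphereSet d) ∩ {p | T p ≤ ⟪Z p, A p⟫} := rfl
  rw [he]
  exact ((Metric.isClosed_sphere.preimage hA).measurableSet).inter
    (isClosed_le hT (Continuous.inner hZ hA)).measurableSet

/-- Rotation invariance: caps with centers on the sphere have the same Hausdorff measure. -/
lemma hausdorff_cap_rot (d : ℕ) (t : ℝ) {z w : EuclideanSpace ℝ (Fin (d + 1))}
    (hz : z ∈ sphereSet d) (hw : w ∈ sphereSet d) :
    μH[(d : ℝ)] (cap d z t) = μH[(d : ℝ)] (cap d w t) := by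
  have hnorm : ‖z‖ = ‖w‖ := by
    rw [mem_sphereSet_iff.mp hz, mem_sphereSet_iff.mp hw]
  set f := Submodule.reflection (ℝ ∙ (z - w))ᗮ with hf
  have hfz : f z = w := Submodule.reflection_sub hnorm
  have himg : cap d w t = f '' cap d z t := by
    ext y
    constructor
    · rintro ⟨hyS, hyt⟩
      refine ⟨f.symm y, ⟨?_, ?_⟩, f.apply_symm_apply y⟩
      · rw [mem_sphereSet_iff, f.symm.norm_map, mem_sphereSet_iff.mp hyS]
      · have h1 : ⟪f z, f (f.symm y)⟫ = ⟪z, f.symm y⟫ := f.inner_map_map z (f.symm y)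
        rw [hfz, f.apply_symm_apply] at h1
        rw [← h1]; exact hyt
    · rintro ⟨u, ⟨huS, hut⟩, rfl⟩
      refine ⟨?_, ?_⟩
      · rw [mem_sphereSet_iff, f.norm_map, mem_sphereSet_iff.mp huS]
      · have h1 : ⟪f z, f u⟫ = ⟪z, u⟫ := f.inner_map_map z u
        rw [hfz] at h1
        rw [h1]; exact hut
  rw [himg, f.isometry.hausdorffMeasure_image (Or.inl (by positivity))]

end Aux

/-- Squared kernel-distance invariance principle. -/
theorem squared_kernel_distance_invariance (d N : ℕ) (hd : 2 ≤ d) (hN : 0 < N)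
    (v : ℝ → ℝ)
    (hv0 : ∀ t ∈ Set.Icc (-1 : ℝ) 1, 0 ≤ v t)
    (hvInt : IntervalIntegrable v MeasureTheory.volume (-1) 1)
    (D : EuclideanSpace ℝ (Fin (d + 1)) → EuclideanSpace ℝ (Fin (d + 1)) → ℝ)
    (hD : ∀ p q, D p q = Kv d v p p - 2 * Kv d v p q + Kv d v q q)
    (x : Fin N → EuclideanSpace ℝ (Fin (d + 1)))
    (hx : ∀ k, x k ∈ sphereSet d) :
    (1 / (N : ℝ) ^ 2) * (∑ k, ∑ l, D (x k) (x l))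
      + 2 * ∫ t in (-1 : ℝ)..1, v t * ∫ z,
          |((uSph d) (cap d z t)).toReal - (1 / (N : ℝ)) * ∑ k, capInd d z t (x k)| ^ 2
          ∂(uSph d)
    = ∫ a, ∫ b, D a b ∂(uSph d) ∂(uSph d) := by
  classical
  by_cases hdeg : μH[(d : ℝ)] (sphereSet d) = 0 ∨ μH[(d : ℝ)] (sphereSet d) = ⊤
  · -- degenerate case: the normalized measure is the zero measure
    have hμ0 : uSph d = 0 := by
      rcases hdeg with h | h
      · rw [uSph, Measure.restrict_eq_zero.mpr h, smul_zero]
      · rw [uSph, h, ENNReal.inv_top, zero_smul]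
    have hK : ∀ p q, Kv d v p q = 0 := by
      intro p q; simp [Kv, hμ0]
    simp [hD, hK, hμ0]
  push_neg at hdeg
  obtain ⟨hc0, hcT⟩ := hdeg
  have hSmeas := measurableSet_sphereSet d
  have hμapp : ∀ A : Set (EuclideanSpace ℝ (Fin (d + 1))), MeasurableSet A →
      uSph d A = (μH[(d : ℝ)] (sphereSet d))⁻¹ * μH[(d : ℝ)] (A ∩ sphereSet d) := by
    intro A hA
    rw [uSph, Measure.smul_apply, Measure.restrict_apply hA, smul_eq_mul]
  have hprob : IsProbabilityMeasure (uSph d) := by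
    constructor
    rw [hμapp _ MeasurableSet.univ, Set.univ_inter]
    exact ENNReal.inv_mul_cancel hc0 hcT
  have hae : ∀ᵐ z ∂(uSph d), z ∈ sphereSet d := by
    rw [ae_iff]
    have h : {z | ¬ z ∈ sphereSet d} = (sphereSet d)ᶜ := rfl
    rw [h, hμapp _ hSmeas.compl, Set.compl_inter_self, measure_empty, mul_zero]
  -- rotation invariance for the normalized measure
  have hrot : ∀ (t : ℝ) {z w : EuclideanSpace ℝ (Fin (d + 1))},
      z ∈ sphereSet d → w ∈ sphereSet d → uSph d (cap d z t) = uSph d (cap d w t) := by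
    intro t z w hz hw
    rw [hμapp _ (measurableSet_cap d z t), hμapp _ (measurableSet_cap d w t),
      Set.inter_eq_left.mpr (fun y hy => hy.1), Set.inter_eq_left.mpr (fun y hy => hy.1),
      hausdorff_cap_rot d t hz hw]
  set z0 := x ⟨0, hN⟩ with hz0def
  have hz0 : z0 ∈ sphereSet d := hx _
  have hφ0 : ∀ t, 0 ≤ Phi d z0 t := fun t => ENNReal.toReal_nonneg
  have hφ1 : ∀ t, Phi d z0 t ≤ 1 := by
    intro t
    calc (uSph d (cap d z0 t)).toReal
        ≤ (1 : ENNReal).toReal := ENNReal.toReal_mono ENNReal.one_ne_top prob_le_one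
      _ = 1 := ENNReal.toReal_one
  have hφanti : Antitone (Phi d z0) := by
    intro s t hst
    exact ENNReal.toReal_mono (measure_ne_top _ _)
      (measure_mono (fun y hy => ⟨hy.1, hst.trans hy.2⟩))
  have hφmeas : Measurable (Phi d z0) := hφanti.measurable
  -- the spherical-symmetry integral identity
  have hμV : ∀ (t : ℝ) (a : EuclideanSpace ℝ (Fin (d + 1))), a ∈ sphereSet d →
      uSph d (Vset d a t) = uSph d (cap d a t) := by
    intro t a ha
    rw [hμapp _ (measurableSet_Vset d a t), hμapp _ (measurableSet_cap d a t)]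
    congr 2
    ext y
    simp only [Set.mem_inter_iff, Vset, cap, Set.mem_setOf_eq]
    constructor
    · rintro ⟨⟨_, hty⟩, hyS⟩; exact ⟨⟨hyS, by rwa [real_inner_comm]⟩, hyS⟩
    · rintro ⟨⟨hyS, hty⟩, hyS'⟩; exact ⟨⟨ha, by rwa [real_inner_comm]⟩, hyS'⟩
  have hcapInt : ∀ (t : ℝ) (a : EuclideanSpace ℝ (Fin (d + 1))), a ∈ sphereSet d →
      ∫ z, capInd d z t a ∂(uSph d) = Phi d z0 t := by
    intro t a ha
    have h1 : (fun z => capInd d z t a) = (Vset d a t).indicator (fun _ => (1 : ℝ)) := by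
      funext z; exact capInd_eq d z t a
    rw [h1, integral_indicator_const (1 : ℝ) (measurableSet_Vset d a t), smul_eq_mul, mul_one, measureReal_def,
      hμV t a ha]
    exact congrArg ENNReal.toReal (hrot t ha hz0)
  have hKv : ∀ a b, Kv d v a b = ∫ t in (-1 : ℝ)..1, v t * Gfun d a b t := fun a b => rfl
  have hGf_eq : ∀ a b t, Gfun d a b t = (uSph d (Vset d a t ∩ Vset d b t)).toReal := by
    intro a b t
    have h1 : (fun z => capInd d z t a * capInd d z t b)
        = (Vset d a t ∩ Vset d b t).indicator (fun _ => (1 : ℝ)) := by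
      funext z; exact capInd_mul d z t a b
    show (∫ z, capInd d z t a * capInd d z t b ∂(uSph d)) = _
    rw [h1, integral_indicator_const (1 : ℝ)
      ((measurableSet_Vset d a t).inter (measurableSet_Vset d b t)), smul_eq_mul, mul_one, measureReal_def]
  have hGf0 : ∀ a b t, 0 ≤ Gfun d a b t := by
    intro a b t; rw [hGf_eq]; exact ENNReal.toReal_nonneg
  have hGf1 : ∀ a b t, Gfun d a b t ≤ 1 := by
    intro a b t; rw [hGf_eq]
    calc (uSph d _).toReal
        ≤ (1 : ENNReal).toReal := ENNReal.toReal_mono ENNReal.one_ne_top prob_le_one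
      _ = 1 := ENNReal.toReal_one
  have hGfanti : ∀ a b, Antitone (Gfun d a b) := by
    intro a b s t hst
    rw [hGf_eq, hGf_eq]
    refine ENNReal.toReal_mono (measure_ne_top _ _) (measure_mono ?_)
    rintro y ⟨⟨h1, h2⟩, h3, h4⟩
    exact ⟨⟨h1, hst.trans h2⟩, h3, hst.trans h4⟩
  -- interval integrability helper
  have hIntvF : ∀ F : ℝ → ℝ, Measurable F → (∀ t, 0 ≤ F t) → (∀ t, F t ≤ 1) →
      IntervalIntegrable (fun t => v t * F t) volume (-1 : ℝ) 1 := by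
    intro F hFm hF0 hF1
    have h1 : IntegrableOn v (Set.Ioc (-1 : ℝ) 1) volume := hvInt.1
    rw [intervalIntegrable_iff_integrableOn_Ioc_of_le (by norm_num : (-1 : ℝ) ≤ 1)]
    refine Integrable.mono' h1.abs (h1.aestronglyMeasurable.mul hFm.aestronglyMeasurable) ?_
    refine Filter.Eventually.of_forall fun t => ?_
    rw [Real.norm_eq_abs, abs_mul]
    exact mul_le_of_le_one_right (abs_nonneg _) (abs_le.mpr ⟨by linarith [hF0 t], hF1 t⟩)
  set κ : ℝ := ∫ t in (-1 : ℝ)..1, v t * Phi d z0 t with hκdef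
  set κ2 : ℝ := ∫ t in (-1 : ℝ)..1, v t * (Phi d z0 t) ^ 2 with hκ2def
  have hIφ2 := hIntvF (fun t => (Phi d z0 t) ^ 2) (hφmeas.pow_const 2)
    (fun t => sq_nonneg _) (fun t => pow_le_one₀ (hφ0 t) (hφ1 t))
  have hIG : ∀ a b, IntervalIntegrable (fun t => v t * Gfun d a b t) volume (-1 : ℝ) 1 :=
    fun a b => hIntvF _ (hGfanti a b).measurable (hGf0 a b) (hGf1 a b)
  -- diagonal kernel values
  have hGdiag : ∀ (t : ℝ) (a : EuclideanSpace ℝ (Fin (d + 1))), a ∈ sphereSet d →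
      Gfun d a a t = Phi d z0 t := by
    intro t a ha
    have h1 : (fun z => capInd d z t a * capInd d z t a) = fun z => capInd d z t a := by
      funext z; exact capInd_mul_self d z t a
    show (∫ z, capInd d z t a * capInd d z t a ∂(uSph d)) = Phi d z0 t
    rw [h1]
    exact hcapInt t a ha
  have hdiagK : ∀ a, a ∈ sphereSet d → Kv d v a a = κ := by
    intro a ha
    rw [hKv, hκdef]
    refine intervalIntegral.integral_congr fun t _ => ?_
    rw [hGdiag t a ha]
  -- integrability helper over the sphere measure
  have hIntb : ∀ f : EuclideanSpace ℝ (Fin (d + 1)) → ℝ, Measurable f → (∀ z, |f z| ≤ 1) →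
      Integrable f (uSph d) := by
    intro f hf hb
    refine (integrable_const (1 : ℝ)).mono' hf.aestronglyMeasurable ?_
    exact Filter.Eventually.of_forall fun z => by rw [Real.norm_eq_abs]; exact hb z
  -- per-t computation of the discrepancy integral
  have hdisc : ∀ t : ℝ,
      (∫ z, |((uSph d) (cap d z t)).toReal - (1 / (N : ℝ)) * ∑ k, capInd d z t (x k)| ^ 2
        ∂(uSph d))
      = (1 / (N : ℝ) ^ 2) * (∑ k, ∑ l, Gfun d (x k) (x l) t) - (Phi d z0 t) ^ 2 := by
    intro t
    have hmk : ∀ k : Fin N, Measurable fun z => capInd d z t (x k) := fun k =>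
      measurable_capInd_comp d continuous_id continuous_const continuous_const
    have hintk : ∀ k : Fin N, Integrable (fun z => capInd d z t (x k)) (uSph d) := fun k =>
      hIntb _ (hmk k) (fun z => abs_capInd_le_one d z t (x k))
    have hintkl : ∀ k l : Fin N,
        Integrable (fun z => capInd d z t (x k) * capInd d z t (x l)) (uSph d) := by
      intro k l
      refine hIntb _ ((hmk k).mul (hmk l)) fun z => ?_
      rw [abs_mul]
      exact mul_le_one₀ (abs_capInd_le_one d z t (x k)) (abs_nonneg _)
        (abs_capInd_le_one d z t (x l))
    have hS : Integrable (fun z => ∑ k, capInd d z t (x k)) (uSph d) :=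
      integrable_finset_sum _ fun k _ => hintk k
    have hQ : Integrable (fun z => ∑ k, ∑ l, capInd d z t (x k) * capInd d z t (x l))
        (uSph d) :=
      integrable_finset_sum _ fun k _ => integrable_finset_sum _ fun l _ => hintkl k l
    have h1 : (∫ z, |((uSph d) (cap d z t)).toReal
          - (1 / (N : ℝ)) * ∑ k, capInd d z t (x k)| ^ 2 ∂(uSph d))
        = ∫ z, ((Phi d z0 t) ^ 2
            - (2 * Phi d z0 t / N) * (∑ k, capInd d z t (x k))
            + (1 / (N : ℝ) ^ 2) * ∑ k, ∑ l, capInd d z t (x k) * capInd d z t (x l))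
            ∂(uSph d) := by
      refine integral_congr_ae ?_
      filter_upwards [hae] with z hz
      rw [sq_abs, hrot t hz hz0]
      show (Phi d z0 t - (1 / (N : ℝ)) * ∑ k, capInd d z t (x k)) ^ 2 = _
      rw [← Finset.sum_mul_sum]
      ring
    have hf1 : Integrable (fun z =>
        (Phi d z0 t) ^ 2 - (2 * Phi d z0 t / N) * ∑ k, capInd d z t (x k)) (uSph d) :=
      (integrable_const _).sub (hS.const_mul _)
    have hf2 : Integrable (fun z =>
        (1 / (N : ℝ) ^ 2) * ∑ k, ∑ l, capInd d z t (x k) * capInd d z t (x l)) (uSph d) :=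
      hQ.const_mul _
    have hf3 : Integrable (fun z =>
        (2 * Phi d z0 t / N) * ∑ k, capInd d z t (x k)) (uSph d) := hS.const_mul _
    rw [h1, integral_add hf1 hf2, integral_sub (integrable_const _) hf3, integral_const,
      integral_const_mul, integral_const_mul,
      integral_finset_sum _ (fun k _ => hintk k)]
    have hsum1 : (∑ k : Fin N, ∫ z, capInd d z t (x k) ∂(uSph d)) = N * Phi d z0 t := by
      rw [Finset.sum_congr rfl fun k _ => hcapInt t (x k) (hx k)]
      simp [Finset.sum_const, Finset.card_univ, mul_comm]
    have hsum2 : (∫ z, ∑ k, ∑ l, capInd d z t (x k) * capInd d z t (x l) ∂(uSph d))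
        = ∑ k, ∑ l, Gfun d (x k) (x l) t := by
      rw [integral_finset_sum _ (fun k _ => integrable_finset_sum _ fun l _ => hintkl k l)]
      refine Finset.sum_congr rfl fun k _ => ?_
      rw [integral_finset_sum _ (fun l _ => hintkl k l)]
      rfl
    rw [hsum1, hsum2, probReal_univ, smul_eq_mul, one_mul]
    have hNne : (N : ℝ) ≠ 0 := Nat.cast_ne_zero.mpr hN.ne'
    field_simp
    ring
  -- the discrepancy term
  have hL2 : (∫ t in (-1 : ℝ)..1, v t * ∫ z,
        |((uSph d) (cap d z t)).toReal - (1 / (N : ℝ)) * ∑ k, capInd d z t (x k)| ^ 2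
        ∂(uSph d))
      = (1 / (N : ℝ) ^ 2) * (∑ k, ∑ l, Kv d v (x k) (x l)) - κ2 := by
    have h1 : ∀ t ∈ Set.uIcc (-1 : ℝ) 1,
        v t * (∫ z, |((uSph d) (cap d z t)).toReal
            - (1 / (N : ℝ)) * ∑ k, capInd d z t (x k)| ^ 2 ∂(uSph d))
        = (1 / (N : ℝ) ^ 2) * (∑ k, ∑ l, v t * Gfun d (x k) (x l) t)
            - v t * (Phi d z0 t) ^ 2 := by
      intro t _
      rw [hdisc t]
      have h2 : (∑ k : Fin N, ∑ l : Fin N, v t * Gfun d (x k) (x l) t)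
          = v t * ∑ k, ∑ l, Gfun d (x k) (x l) t := by
        rw [Finset.mul_sum]
        exact Finset.sum_congr rfl fun k _ => (Finset.mul_sum _ _ _).symm
      rw [h2]
      ring
    have hI1 : IntervalIntegrable
        (fun t => ∑ k : Fin N, ∑ l : Fin N, v t * Gfun d (x k) (x l) t) volume (-1 : ℝ) 1 := by
      have he : (fun t => ∑ k : Fin N, ∑ l : Fin N, v t * Gfun d (x k) (x l) t)
          = ∑ k : Fin N, ∑ l : Fin N, (fun t => v t * Gfun d (x k) (x l) t) := by
        funext t
        rw [Finset.sum_apply]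
        exact Finset.sum_congr rfl fun k _ => by rw [Finset.sum_apply]
      rw [he]
      exact IntervalIntegrable.sum Finset.univ fun k _ =>
        IntervalIntegrable.sum Finset.univ fun l _ => hIG (x k) (x l)
    have hI2 : IntervalIntegrable
        (fun t => (1 / (N : ℝ) ^ 2) * ∑ k : Fin N, ∑ l : Fin N, v t * Gfun d (x k) (x l) t)
        volume (-1 : ℝ) 1 := hI1.const_mul _
    have hIφ2' : IntervalIntegrable (fun t => v t * Phi d z0 t ^ 2) volume (-1 : ℝ) 1 := hIφ2
    have hIkl : ∀ k : Fin N, IntervalIntegrable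
        (fun t => ∑ l : Fin N, v t * Gfun d (x k) (x l) t) volume (-1 : ℝ) 1 := by
      intro k
      have he : (fun t => ∑ l : Fin N, v t * Gfun d (x k) (x l) t)
          = ∑ l : Fin N, (fun t => v t * Gfun d (x k) (x l) t) := by
        funext t; rw [Finset.sum_apply]
      rw [he]
      exact IntervalIntegrable.sum Finset.univ fun l _ => hIG (x k) (x l)
    rw [intervalIntegral.integral_congr h1,
      intervalIntegral.integral_sub hI2 hIφ2',
      intervalIntegral.integral_const_mul,
      intervalIntegral.integral_finset_sum (fun k _ => hIkl k)]
    rw [hκ2def]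
    congr 1
    congr 1
    refine Finset.sum_congr rfl fun k _ => ?_
    rw [intervalIntegral.integral_finset_sum (fun l _ => hIG (x k) (x l))]
    exact Finset.sum_congr rfl fun l _ => (hKv (x k) (x l)).symm
  -- the double sum term
  have hL1 : (∑ k, ∑ l, D (x k) (x l))
      = (N : ℝ) ^ 2 * (2 * κ) - 2 * ∑ k, ∑ l, Kv d v (x k) (x l) := by
    have h1 : ∀ k l : Fin N, D (x k) (x l) = 2 * κ - 2 * Kv d v (x k) (x l) := by
      intro k l; rw [hD, hdiagK _ (hx k), hdiagK _ (hx l)]; ring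
    calc (∑ k, ∑ l, D (x k) (x l))
        = ∑ k : Fin N, ∑ l : Fin N, (2 * κ - 2 * Kv d v (x k) (x l)) :=
          Finset.sum_congr rfl fun k _ => Finset.sum_congr rfl fun l _ => h1 k l
      _ = ∑ k : Fin N, ((N : ℝ) * (2 * κ) - 2 * ∑ l, Kv d v (x k) (x l)) := by
          refine Finset.sum_congr rfl fun k _ => ?_
          rw [Finset.sum_sub_distrib, Finset.sum_const, Finset.card_univ, Fintype.card_fin,
            nsmul_eq_mul, ← Finset.mul_sum]
      _ = (N : ℝ) ^ 2 * (2 * κ) - 2 * ∑ k, ∑ l, Kv d v (x k) (x l) := by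
          rw [Finset.sum_sub_distrib, Finset.sum_const, Finset.card_univ, Fintype.card_fin,
            nsmul_eq_mul, ← Finset.mul_sum]
          ring
  -- Fubini: the average of the kernel over the sphere
  have hKint : ∀ a, a ∈ sphereSet d → Integrable (fun b => Kv d v a b) (uSph d) ∧
      (∫ b, Kv d v a b ∂(uSph d)) = κ2 := by
    intro a ha
    set ν := MeasureTheory.volume.restrict (Set.Ioc (-1 : ℝ) 1) with hν
    have hvν : Integrable v ν := hvInt.1
    have hFm : Measurable (fun p : (EuclideanSpace ℝ (Fin (d + 1)) × ℝ) ×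
        EuclideanSpace ℝ (Fin (d + 1)) => capInd d p.2 p.1.2 a * capInd d p.2 p.1.2 p.1.1) :=
      (measurable_capInd_comp d continuous_snd (continuous_fst.snd) continuous_const).mul
        (measurable_capInd_comp d continuous_snd (continuous_fst.snd) (continuous_fst.fst))
    have hGm : StronglyMeasurable
        (fun p : EuclideanSpace ℝ (Fin (d + 1)) × ℝ => Gfun d a p.1 p.2) :=
      hFm.stronglyMeasurable.integral_prod_right'
    have hprodInt : Integrable
        (fun p : EuclideanSpace ℝ (Fin (d + 1)) × ℝ => v p.2 * Gfun d a p.1 p.2)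
        ((uSph d).prod ν) := by
      have hb : Integrable (fun p : EuclideanSpace ℝ (Fin (d + 1)) × ℝ => (1 : ℝ) * |v p.2|)
          ((uSph d).prod ν) := (integrable_const (1 : ℝ)).mul_prod hvν.abs
      simp only [one_mul] at hb
      refine hb.mono' (hvν.aestronglyMeasurable.comp_snd.mul hGm.aestronglyMeasurable) ?_
      refine Filter.Eventually.of_forall fun p => ?_
      rw [Real.norm_eq_abs, abs_mul]
      exact mul_le_of_le_one_right (abs_nonneg _)
        (abs_le.mpr ⟨by linarith [hGf0 a p.1 p.2], hGf1 a p.1 p.2⟩)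
    have hswap := MeasureTheory.integral_integral_swap
      (f := fun (b : EuclideanSpace ℝ (Fin (d + 1))) (t : ℝ) => v t * Gfun d a b t) hprodInt
    have hKveq : (fun b => Kv d v a b)
        = fun b => ∫ t, v t * Gfun d a b t ∂ν := by
      funext b
      rw [hKv, hν, intervalIntegral.integral_of_le (by norm_num : (-1 : ℝ) ≤ 1)]
    have hGb : ∀ t : ℝ, (∫ b, Gfun d a b t ∂(uSph d)) = (Phi d z0 t) ^ 2 := by
      intro t
      have hFm2 : Measurable (fun q : EuclideanSpace ℝ (Fin (d + 1)) ×
          EuclideanSpace ℝ (Fin (d + 1)) => capInd d q.2 t a * capInd d q.2 t q.1) :=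
        (measurable_capInd_comp d continuous_snd continuous_const continuous_const).mul
          (measurable_capInd_comp d continuous_snd continuous_const continuous_fst)
      have hint2 : Integrable (fun q : EuclideanSpace ℝ (Fin (d + 1)) ×
          EuclideanSpace ℝ (Fin (d + 1)) => capInd d q.2 t a * capInd d q.2 t q.1)
          ((uSph d).prod (uSph d)) := by
        refine (integrable_const (1 : ℝ)).mono' hFm2.aestronglyMeasurable ?_
        refine Filter.Eventually.of_forall fun q => ?_
        rw [Real.norm_eq_abs, abs_mul]
        exact mul_le_one₀ (abs_capInd_le_one d q.2 t a) (abs_nonneg _)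
          (abs_capInd_le_one d q.2 t q.1)
      have hswap2 := MeasureTheory.integral_integral_swap
        (f := fun (b z : EuclideanSpace ℝ (Fin (d + 1))) =>
          capInd d z t a * capInd d z t b) hint2
      have h3 : ∀ z : EuclideanSpace ℝ (Fin (d + 1)),
          (∫ b, capInd d z t a * capInd d z t b ∂(uSph d))
          = capInd d z t a * ((uSph d) (cap d z t)).toReal := by
        intro z
        rw [integral_const_mul]
        congr 1
        have he : (fun b => capInd d z t b) = (cap d z t).indicator (fun _ => (1 : ℝ)) := rfl
        rw [he, integral_indicator_const (1 : ℝ) (measurableSet_cap d z t), smul_eq_mul, mul_one, measureReal_def]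
      have h4 : (∫ z, (∫ b, capInd d z t a * capInd d z t b ∂(uSph d)) ∂(uSph d))
          = ∫ z, capInd d z t a * Phi d z0 t ∂(uSph d) := by
        refine integral_congr_ae ?_
        filter_upwards [hae] with z hz
        rw [h3 z]
        exact congrArg (capInd d z t a * ·) (congrArg ENNReal.toReal (hrot t hz hz0))
      show (∫ b, ∫ z, capInd d z t a * capInd d z t b ∂(uSph d) ∂(uSph d)) = _
      rw [hswap2, h4, integral_mul_const, hcapInt t a ha]
      ring
    constructor
    · have h5 := hprodInt.integral_prod_left
      rwa [← hKveq] at h5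
    · rw [hKveq, hswap]
      have h5 : ∀ t : ℝ, (∫ b, v t * Gfun d a b t ∂(uSph d)) = v t * (Phi d z0 t) ^ 2 := by
        intro t; rw [integral_const_mul, hGb t]
      rw [integral_congr_ae (Filter.Eventually.of_forall h5), hκ2def, hν,
        intervalIntegral.integral_of_le (by norm_num : (-1 : ℝ) ≤ 1)]
  -- the inner integral of D
  have hinner : ∀ a, a ∈ sphereSet d → (∫ b, D a b ∂(uSph d)) = 2 * κ - 2 * κ2 := by
    intro a ha
    obtain ⟨hKaInt, hKa⟩ := hKint a ha
    have h1 : (∫ b, D a b ∂(uSph d)) = ∫ b, (2 * κ - 2 * Kv d v a b) ∂(uSph d) := by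
      refine integral_congr_ae ?_
      filter_upwards [hae] with b hb
      rw [hD, hdiagK a ha, hdiagK b hb]; ring
    rw [h1, integral_sub (integrable_const _) (hKaInt.const_mul 2), integral_const,
      probReal_univ, one_smul, integral_const_mul, hKa]
  have houter : (∫ a, ∫ b, D a b ∂(uSph d) ∂(uSph d)) = 2 * κ - 2 * κ2 := by
    have h1 : (∫ a, ∫ b, D a b ∂(uSph d) ∂(uSph d))
        = ∫ _a, (2 * κ - 2 * κ2) ∂(uSph d) :=
      integral_congr_ae (by filter_upwards [hae] with a ha; rw [hinner a ha])
    rw [h1, integral_const, probReal_univ, one_smul]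
  rw [houter, hL1, hL2]
  have hNne : (N : ℝ) ≠ 0 := Nat.cast_ne_zero.mpr hN.ne'
  field_simp
  ring
end
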